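/- Let $0 < p < 1$, $n \ge 2$, and let $T_1, \ldots, T_n$ denote the arrival times of a single packet at the $n$ leaves of a complete binary tree of depth $\log_2 n$ with independent per-edge geometric($p$) delays (each $T_i \sim NB(\log_2 n, p)$, but the $T_i$ are correlated through shared edges). Let $\hat T_1, \ldots, \hat T_n$ be i.i.d. $NB(\log_2 n, p)$. Then $\mathbb{E}[\max(T_1, \ldots, T_n)] \le \mathbb{E}[\max(\hat T_1, \ldots, \hat T_n)]$. -/

import Mathlib

open MeasureTheory ProbabilityTheory Filter

lemma cheb_real (a b : ℝ) (ha : 0 ≤ a) (hb : 0 ≤ b) (m : ℕ) :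
    a ^ m * b + b ^ m * a ≤ a ^ (m+1) + b ^ (m+1) := by
  rw [pow_succ, pow_succ]
  rcases le_total a b with h | h
  · have h1 : a ^ m ≤ b ^ m := pow_le_pow_left₀ ha h m
    nlinarith [mul_nonneg (sub_nonneg.2 h) (sub_nonneg.2 h1)]
  · have h1 : b ^ m ≤ a ^ m := pow_le_pow_left₀ hb h m
    nlinarith [mul_nonneg (sub_nonneg.2 h) (sub_nonneg.2 h1)]

lemma cheb_pt (a b : ENNReal) (m : ℕ) : a ^ m * b + b ^ m * a ≤ a ^ (m+1) + b ^ (m+1) := by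
  rcases eq_or_ne a ⊤ with rfl | ha
  · rcases eq_or_ne b 0 with rfl | hb
    · rcases Nat.eq_zero_or_pos m with rfl | hm
      · simp
      · simp [zero_pow hm.ne', ENNReal.top_pow]
    · have h1 : b ^ m * ⊤ = ⊤ := by
        rw [ENNReal.mul_top]; exact pow_ne_zero m hb
      calc (⊤:ENNReal) ^ m * b + b ^ m * ⊤ = ⊤ := by rw [h1]; simp
        _ ≤ _ := le_top
  rcases eq_or_ne b ⊤ with rfl | hb
  · rcases eq_or_ne a 0 with rfl | ha0
    · rcases Nat.eq_zero_or_pos m with rfl | hm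
      · simp
      · simp [zero_pow hm.ne', ENNReal.top_pow]
    · have h1 : a ^ m * ⊤ = ⊤ := by
        rw [ENNReal.mul_top]; exact pow_ne_zero m ha0
      calc a ^ m * ⊤ + (⊤:ENNReal) ^ m * a = ⊤ := by rw [h1]; simp
        _ ≤ _ := by simp [ENNReal.top_pow]
  lift a to NNReal using ha
  lift b to NNReal using hb
  have h2 := cheb_real a b a.2 b.2 m
  have h3 : (a:NNReal) ^ m * b + b ^ m * a ≤ a ^ (m+1) + b ^ (m+1) := by exact_mod_cast h2
  exact_mod_cast h3

lemma cheb_sum (s : Finset ℕ) (q u : ℕ → ENNReal) (m : ℕ) :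
    (∑ x ∈ s, q x * u x ^ m) * (∑ x ∈ s, q x * u x) ≤
      (∑ x ∈ s, q x) * (∑ x ∈ s, q x * u x ^ (m+1)) := by
  set A := (∑ x ∈ s, q x * u x ^ m) * (∑ x ∈ s, q x * u x) with hA
  set B := (∑ x ∈ s, q x) * (∑ x ∈ s, q x * u x ^ (m+1)) with hB
  have key : A + A ≤ B + B := by
    have eA : A + A = ∑ x ∈ s, ∑ y ∈ s,
        (q x * u x ^ m * (q y * u y) + q y * u y ^ m * (q x * u x)) := by
      rw [hA, Finset.sum_mul_sum]
      nth_rewrite 2 [Finset.sum_comm]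
      rw [← Finset.sum_add_distrib]
      refine Finset.sum_congr rfl fun x _ => ?_
      rw [← Finset.sum_add_distrib]
    have eB : B + B = ∑ x ∈ s, ∑ y ∈ s,
        (q x * (q y * u y ^ (m+1)) + q y * (q x * u x ^ (m+1))) := by
      rw [hB, Finset.sum_mul_sum]
      nth_rewrite 2 [Finset.sum_comm]
      rw [← Finset.sum_add_distrib]
      refine Finset.sum_congr rfl fun x _ => ?_
      rw [← Finset.sum_add_distrib]
    rw [eA, eB]
    refine Finset.sum_le_sum fun x _ => Finset.sum_le_sum fun y _ => ?_
    calc q x * u x ^ m * (q y * u y) + q y * u y ^ m * (q x * u x)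
        = q x * q y * (u x ^ m * u y + u y ^ m * u x) := by ring
      _ ≤ q x * q y * (u x ^ (m+1) + u y ^ (m+1)) := mul_le_mul_right (cheb_pt _ _ m) _
      _ = q x * (q y * u y ^ (m+1)) + q y * (q x * u x ^ (m+1)) := by ring
  have h3 : (2:ENNReal) * A ≤ 2 * B := by rw [two_mul, two_mul]; exact key
  exact (ENNReal.mul_le_mul_iff_right two_ne_zero (by norm_num)).1 h3

lemma jensen_pow (s : Finset ℕ) (q u : ℕ → ENNReal) (hq : ∑ x ∈ s, q x ≤ 1)
    (m : ℕ) (hm : 1 ≤ m) :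
    (∑ x ∈ s, q x * u x) ^ m ≤ ∑ x ∈ s, q x * u x ^ m := by
  induction m with
  | zero => omega
  | succ m ih =>
    rcases Nat.eq_zero_or_pos m with rfl | hm'
    · simp
    calc (∑ x ∈ s, q x * u x) ^ (m+1) = (∑ x ∈ s, q x * u x) ^ m * (∑ x ∈ s, q x * u x) := by
          rw [pow_succ]
      _ ≤ (∑ x ∈ s, q x * u x ^ m) * (∑ x ∈ s, q x * u x) :=
          mul_le_mul_left (ih hm') _
      _ ≤ (∑ x ∈ s, q x) * (∑ x ∈ s, q x * u x ^ (m+1)) := cheb_sum s q u m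
      _ ≤ 1 * (∑ x ∈ s, q x * u x ^ (m+1)) := mul_le_mul_left hq _
      _ = _ := one_mul _

lemma nat_cast_eq_tsum (n : ℕ) : (n : ENNReal) = ∑' t : ℕ, if t < n then 1 else 0 := by
  rw [tsum_eq_sum (s := Finset.range n) (by intro b hb; simp [Finset.mem_range] at hb; simp [hb])]
  rw [Finset.sum_congr rfl (fun t ht => if_pos (Finset.mem_range.1 ht))]
  simp

lemma lintegral_nat {Ω : Type*} [MeasurableSpace Ω] (μ : Measure Ω) (f : Ω → ℕ)
    (hf : Measurable f) :
    ∫⁻ ω, (f ω : ENNReal) ∂μ = ∑' t : ℕ, μ {ω | t < f ω} := by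
  have hms : ∀ t : ℕ, MeasurableSet {ω' | t < f ω'} := fun t => hf measurableSet_Ioi
  have h1 : ∀ ω, (f ω : ENNReal) = ∑' t : ℕ, Set.indicator {ω' | t < f ω'} (fun _ => 1) ω := by
    intro ω
    rw [nat_cast_eq_tsum]
    refine tsum_congr fun t => ?_
    by_cases h : t < f ω <;> simp [Set.indicator, h]
  calc ∫⁻ ω, (f ω : ENNReal) ∂μ
      = ∫⁻ ω, ∑' t : ℕ, Set.indicator {ω' | t < f ω'} (fun _ => 1) ω ∂μ := by
        exact lintegral_congr h1
    _ = ∑' t : ℕ, ∫⁻ ω, Set.indicator {ω' | t < f ω'} (fun _ => 1) ω ∂μ := by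
        refine lintegral_tsum fun t => ?_
        exact (measurable_const.indicator (hms t)).aemeasurable
    _ = ∑' t : ℕ, μ {ω | t < f ω} := by
        refine tsum_congr fun t => ?_
        rw [lintegral_indicator (hms t)]
        simp

section Fam

variable {ι Ω : Type*} [MeasurableSpace Ω] {μ : Measure Ω} [IsProbabilityMeasure μ]
  {X : ι → Ω → ℕ}

/-- σ-algebra generated by the variables with indices in `S`. -/
def famSA (X : ι → Ω → ℕ) (S : Set ι) : MeasurableSpace Ω :=
  ⨆ i ∈ S, MeasurableSpace.comap (X i) inferInstance

lemma famSA_le (hX : ∀ i, Measurable (X i)) (S : Set ι) :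
    famSA X S ≤ ‹MeasurableSpace Ω› :=
  iSup₂_le fun i _ => (hX i).comap_le

lemma famSA_mono {S T : Set ι} (hST : S ⊆ T) : famSA X S ≤ famSA X T :=
  biSup_mono hST

lemma measurable_famSA {S : Set ι} {i : ι} (hi : i ∈ S) :
    Measurable[famSA X S] (X i) := by
  rw [measurable_iff_comap_le]
  unfold famSA
  exact le_biSup (fun i => MeasurableSpace.comap (X i) inferInstance) hi

lemma measurableSet_sum_le_famSA {S : Set ι} (v : ℕ → ι) (M : ℕ)
    (hv : ∀ k, k < M → v k ∈ S) (t : ℕ) :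
    MeasurableSet[famSA X S] {ω | ∑ k ∈ Finset.range M, X (v k) ω ≤ t} := by
  have hsum : Measurable[famSA X S] (fun ω => ∑ k ∈ Finset.range M, X (v k) ω) := by
    refine Finset.measurable_sum _ fun k hk => ?_
    exact measurable_famSA (hv k (Finset.mem_range.1 hk))
  exact hsum measurableSet_Iic

lemma indep_famSA (hX : ∀ i, Measurable (X i))
    (hind : iIndepFun X μ) {S T : Set ι} (hST : Disjoint S T) :
    Indep (famSA X S) (famSA X T) μ := by
  have h := indep_biSup_compl (fun i => (hX i).comap_le) hind.iIndep S
  exact indep_of_indep_of_le_right h (biSup_mono (Set.disjoint_left.1 hST.symm))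

lemma measure_inter_famSA (hX : ∀ i, Measurable (X i))
    (hind : iIndepFun X μ) {S T : Set ι} (hST : Disjoint S T)
    {A B : Set Ω} (hA : MeasurableSet[famSA X S] A) (hB : MeasurableSet[famSA X T] B) :
    μ (A ∩ B) = μ A * μ B := by
  have h := indep_famSA hX hind hST
  rw [Indep_iff] at h
  exact h A B hA hB

lemma peel (hX : ∀ i, Measurable (X i))
    (hind : iIndepFun X μ) (j : ι) (S : Set ι) (hjS : j ∉ S)
    (C : ℕ → Set Ω) (hC : ∀ w, MeasurableSet[famSA X S] (C w)) :
    μ {ω | ω ∈ C (X j ω)} = ∑' w : ℕ, μ {ω | X j ω = w} * μ (C w) := by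
  have hCamb : ∀ w, MeasurableSet (C w) := fun w => famSA_le hX S _ (hC w)
  have hXj : ∀ w : ℕ, MeasurableSet[famSA X {j}] {ω | X j ω = w} := fun w =>
    measurable_famSA (Set.mem_singleton j) (MeasurableSet.singleton w)
  have hdec : {ω | ω ∈ C (X j ω)} = ⋃ w : ℕ, ({ω | X j ω = w} ∩ C w) := by
    ext ω
    simp only [Set.mem_setOf_eq, Set.mem_iUnion, Set.mem_inter_iff]
    exact ⟨fun h => ⟨X j ω, rfl, h⟩, fun ⟨w, hw, h⟩ => by rwa [hw]⟩
  rw [hdec, measure_iUnion]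
  · refine tsum_congr fun w => ?_
    exact measure_inter_famSA hX hind (Set.disjoint_left.2 (by simpa using hjS)) (hXj w) (hC w)
  · intro w w' hww'
    refine Set.disjoint_left.2 fun ω hω hω' => hww' ?_
    rw [← hω.1, ← hω'.1]
  · intro w
    exact ((hX j) (MeasurableSet.singleton w)).inter (hCamb w)

end Fam

section Geom

/-- unified geometric pmf -/
noncomputable def gp (p : ℝ) : ℕ → ENNReal :=
  fun w => if w = 0 then 0 else ENNReal.ofReal (p ^ (w-1) * (1-p))

lemma tsum_gp_shift {p : ℝ} (hp : 0 ≤ p) (hp1 : p < 1) :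
    ∑' w : ℕ, ENNReal.ofReal (p ^ w * (1-p)) = 1 := by
  have h1 : ∀ w : ℕ, ENNReal.ofReal (p ^ w * (1-p))
      = (ENNReal.ofReal p) ^ w * ENNReal.ofReal (1-p) := by
    intro w
    rw [ENNReal.ofReal_mul (pow_nonneg hp w), ENNReal.ofReal_pow hp]
  simp only [h1]
  rw [ENNReal.tsum_mul_right, ENNReal.tsum_geometric]
  have h2 : (1 : ENNReal) - ENNReal.ofReal p = ENNReal.ofReal (1-p) := by
    rw [← ENNReal.ofReal_one, ← ENNReal.ofReal_sub _ hp]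
  rw [h2]
  exact ENNReal.inv_mul_cancel (ENNReal.ofReal_pos.2 (by linarith)).ne' ENNReal.ofReal_ne_top

lemma tsum_gp {p : ℝ} (hp : 0 ≤ p) (hp1 : p < 1) : ∑' w : ℕ, gp p w = 1 := by
  rw [tsum_eq_zero_add' ENNReal.summable]
  simp only [gp, if_pos rfl, zero_add, Nat.succ_ne_zero, if_neg, Nat.add_sub_cancel]
  convert tsum_gp_shift hp hp1 using 2
  simp

lemma sum_gp_le_one {p : ℝ} (hp : 0 ≤ p) (hp1 : p < 1) (s : Finset ℕ) :
    ∑ w ∈ s, gp p w ≤ 1 := by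
  rw [← tsum_gp hp hp1]
  exact ENNReal.sum_le_tsum s

variable {ι Ω : Type*} [MeasurableSpace Ω] {μ : Measure Ω} [IsProbabilityMeasure μ]
  {X : ι → Ω → ℕ} {p : ℝ}

lemma tsum_pmf_eq_one (hX : ∀ i, Measurable (X i)) (i : ι) :
    ∑' w : ℕ, μ {ω | X i ω = w} = 1 := by
  have hu : ⋃ w : ℕ, {ω | X i ω = w} = Set.univ := by
    ext ω; simp
  rw [← measure_univ (μ := μ), ← hu, measure_iUnion]
  · intro w w' hww'
    refine Set.disjoint_left.2 fun ω hω hω' => hww' ?_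
    rw [← hω, ← hω']
  · exact fun w => (hX i) (MeasurableSet.singleton w)

lemma pmf_unified (hp : 0 ≤ p) (hp1 : p < 1) (hX : ∀ i, Measurable (X i))
    (hgeom : ∀ i, ∀ k : ℕ, 1 ≤ k →
      μ {ω | X i ω = k} = ENNReal.ofReal (p ^ (k - 1) * (1 - p))) (i : ι) (w : ℕ) :
    μ {ω | X i ω = w} = gp p w := by
  rcases Nat.eq_zero_or_pos w with rfl | hw
  · have h1 := tsum_pmf_eq_one (μ := μ) hX i
    rw [tsum_eq_zero_add' ENNReal.summable] at h1
    have h2 : ∑' w : ℕ, μ {ω | X i ω = w + 1} = 1 := by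
      calc ∑' w : ℕ, μ {ω | X i ω = w + 1}
          = ∑' w : ℕ, ENNReal.ofReal (p ^ w * (1-p)) := by
            refine tsum_congr fun w => ?_
            rw [hgeom i (w+1) (Nat.le_add_left 1 w)]
            simp
        _ = 1 := tsum_gp_shift hp hp1
    rw [h2] at h1
    have h3 : μ {ω | X i ω = 0} + 1 = 0 + 1 := by rw [h1, zero_add]
    have h4 := WithTop.add_right_cancel (by simp : (1:ENNReal) ≠ ⊤) h3
    rw [h4]
    simp [gp]
  · rw [hgeom i w hw]
    simp [gp, Nat.pos_iff_ne_zero.1 hw]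

/-- CDF of the sum of `M` i.i.d. geometrics. -/
noncomputable def Hc (p : ℝ) : ℕ → ℕ → ENNReal
  | 0, _ => 1
  | (M+1), t => ∑ w ∈ Finset.Icc 1 t, gp p w * Hc p M (t - w)

lemma Hc_le_one (hp : 0 ≤ p) (hp1 : p < 1) (M t : ℕ) : Hc p M t ≤ 1 := by
  induction M generalizing t with
  | zero => simp [Hc]
  | succ M ih =>
    calc Hc p (M+1) t = ∑ w ∈ Finset.Icc 1 t, gp p w * Hc p M (t - w) := rfl
      _ ≤ ∑ w ∈ Finset.Icc 1 t, gp p w * 1 :=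
          Finset.sum_le_sum fun w _ => mul_le_mul_right (ih (t-w)) _
      _ = ∑ w ∈ Finset.Icc 1 t, gp p w := by simp
      _ ≤ 1 := sum_gp_le_one hp hp1 _

lemma marg_cdf (hp : 0 ≤ p) (hp1 : p < 1) (hX : ∀ i, Measurable (X i))
    (hind : iIndepFun X μ)
    (hgeom : ∀ i, ∀ k : ℕ, 1 ≤ k →
      μ {ω | X i ω = k} = ENNReal.ofReal (p ^ (k - 1) * (1 - p)))
    (v : ℕ → ι) (M : ℕ) (hv : ∀ k l, k < M → l < M → v k = v l → k = l) (t : ℕ) :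
    μ {ω | ∑ k ∈ Finset.range M, X (v k) ω ≤ t} = Hc p M t := by
  induction M generalizing t with
  | zero => simp [Hc]
  | succ M ih =>
    have hv' : ∀ k l, k < M → l < M → v k = v l → k = l :=
      fun k l hk hl => hv k l (hk.trans (Nat.lt_succ_self M)) (hl.trans (Nat.lt_succ_self M))
    have hSdef : True := trivial
    have hjS : v M ∉ v '' Set.Iio M := by
      rintro ⟨k, hk, hkv⟩
      exact absurd (hv k M (Set.mem_Iio.1 hk |>.trans (Nat.lt_succ_self M)) (Nat.lt_succ_self M) hkv)
        (Nat.ne_of_lt (Set.mem_Iio.1 hk))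
    set C : ℕ → Set Ω := fun w => {ω | ∑ k ∈ Finset.range M, X (v k) ω + w ≤ t} with hC
    have hCmeas : ∀ w, MeasurableSet[famSA X (v '' Set.Iio M)] (C w) := by
      intro w
      by_cases h : w ≤ t
      · have : C w = {ω | ∑ k ∈ Finset.range M, X (v k) ω ≤ t - w} := by
          ext ω; simp only [hC, Set.mem_setOf_eq]; omega
        rw [this]
        exact measurableSet_sum_le_famSA (S := v '' Set.Iio M) v M (fun k hk => ⟨k, Set.mem_Iio.2 hk, rfl⟩) _
      · have : C w = ∅ := by
          ext ω; simp only [hC, Set.mem_setOf_eq, Set.mem_empty_iff_false, iff_false]; omega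
        rw [this]
        exact @MeasurableSet.empty _ (famSA X (v '' Set.Iio M))
    have hev : {ω | ∑ k ∈ Finset.range (M+1), X (v k) ω ≤ t} = {ω | ω ∈ C (X (v M) ω)} := by
      ext ω
      simp only [hC, Set.mem_setOf_eq, Finset.sum_range_succ]
    rw [hev, peel hX hind (v M) (v '' Set.Iio M) hjS C hCmeas]
    rw [tsum_eq_sum (s := Finset.Icc 1 t) ?_]
    · refine Finset.sum_congr rfl fun w hw => ?_
      rw [Finset.mem_Icc] at hw
      rw [pmf_unified hp hp1 hX hgeom]
      congr 1
      have : C w = {ω | ∑ k ∈ Finset.range M, X (v k) ω ≤ t - w} := by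
        ext ω; simp only [hC, Set.mem_setOf_eq]; omega
      rw [this, ih hv']
    · intro w hw
      rw [Finset.mem_Icc] at hw
      rcases Nat.eq_zero_or_pos w with rfl | hw1
      · rw [pmf_unified hp hp1 hX hgeom]
        simp [gp]
      · have hwt : t < w := by omega
        have : C w = ∅ := by
          ext ω; simp only [hC, Set.mem_setOf_eq, Set.mem_empty_iff_false, iff_false]; omega
        rw [this]
        simp

end Geom

section Groups

variable {ι Ω : Type*} [MeasurableSpace Ω] {μ : Measure Ω} [IsProbabilityMeasure μ]
  {X : ι → Ω → ℕ}

lemma measurableSet_sum_add_le_famSA {S : Set ι} (v : ℕ → ι) (M : ℕ)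
    (hv : ∀ k, k < M → v k ∈ S) (w t : ℕ) :
    MeasurableSet[famSA X S] {ω | ∑ k ∈ Finset.range M, X (v k) ω + w ≤ t} := by
  by_cases h : w ≤ t
  · have he : {ω | ∑ k ∈ Finset.range M, X (v k) ω + w ≤ t}
        = {ω | ∑ k ∈ Finset.range M, X (v k) ω ≤ t - w} := by
      ext ω; simp only [Set.mem_setOf_eq]; omega
    rw [he]
    exact measurableSet_sum_le_famSA (S := S) v M hv _
  · have he : {ω | ∑ k ∈ Finset.range M, X (v k) ω + w ≤ t} = ∅ := by
      ext ω; simp only [Set.mem_setOf_eq, Set.mem_empty_iff_false, iff_false]; omega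
    rw [he]
    exact @MeasurableSet.empty _ (famSA X S)

lemma prod_groups (hX : ∀ i, Measurable (X i))
    (hind : iIndepFun X μ)
    (s : Finset ℕ) (S : ℕ → Set ι) (hdisj : ∀ a ∈ s, ∀ b ∈ s, a ≠ b → Disjoint (S a) (S b))
    (E : ℕ → Set Ω) (hE : ∀ i ∈ s, MeasurableSet[famSA X (S i)] (E i)) :
    μ (⋂ i ∈ s, E i) = ∏ i ∈ s, μ (E i) := by
  induction s using Finset.induction with
  | empty => simp
  | @insert a s ha ih =>
    have hdisj' : ∀ x ∈ s, ∀ b ∈ s, x ≠ b → Disjoint (S x) (S b) := fun x hx b hb =>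
      hdisj x (Finset.mem_insert_of_mem hx) b (Finset.mem_insert_of_mem hb)
    have hE' : ∀ i ∈ s, MeasurableSet[famSA X (S i)] (E i) := fun i hi =>
      hE i (Finset.mem_insert_of_mem hi)
    have hmeasInter : MeasurableSet[famSA X (⋃ i ∈ s, S i)] (⋂ i ∈ s, E i) := by
      refine MeasurableSet.biInter s.countable_toSet fun i hi => ?_
      exact famSA_mono (Set.subset_biUnion_of_mem hi) _ (hE' i hi)
    have hdisjU : Disjoint (S a) (⋃ i ∈ s, S i) := by
      rw [Set.disjoint_iUnion_right]
      intro i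
      rw [Set.disjoint_iUnion_right]
      intro hi
      exact hdisj a (Finset.mem_insert_self a s) i (Finset.mem_insert_of_mem hi)
        (fun h => ha (h ▸ hi))
    rw [Finset.set_biInter_insert, Finset.prod_insert ha,
      measure_inter_famSA hX hind hdisjU (hE a (Finset.mem_insert_self a s)) hmeasInter,
      ih hdisj' hE']

end Groups

section Tree

/-- vertex set of the (strict) subtree below `c` down to relative depth `N` -/
def Spart (c N : ℕ) : Set ℕ := {v | ∃ a, 1 ≤ a ∧ a ≤ N ∧ c * 2^a ≤ v ∧ v < (c+1) * 2^a}

lemma Spart_mem {c N i k : ℕ} (hlo : c * 2^N ≤ i) (hhi : i < (c+1) * 2^N) (hk : k < N) :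
    i / 2^k ∈ Spart c N := by
  refine ⟨N - k, by omega, by omega, ?_, ?_⟩
  · rw [Nat.le_div_iff_mul_le (Nat.two_pow_pos k)]
    calc c * 2^(N-k) * 2^k = c * 2^N := by rw [mul_assoc, ← pow_add]; congr 2; omega
      _ ≤ i := hlo
  · rw [Nat.div_lt_iff_lt_mul (Nat.two_pow_pos k)]
    calc i < (c+1) * 2^N := hhi
      _ = (c+1) * 2^(N-k) * 2^k := by rw [mul_assoc, ← pow_add]; congr 2; omega

lemma Spart_lb {c N v : ℕ} (hv : v ∈ Spart c N) : 2 * c ≤ v := by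
  obtain ⟨a, ha1, _, hlo, _⟩ := hv
  calc 2 * c = c * 2^1 := by ring
    _ ≤ c * 2^a := Nat.mul_le_mul_left c (Nat.pow_le_pow_right (by norm_num) ha1)
    _ ≤ v := hlo

lemma Spart_disjoint {c N M : ℕ} (hc : 1 ≤ c) :
    Disjoint (Spart (2*c) N) (Spart (2*c+1) M) := by
  rw [Set.disjoint_left]
  rintro v ⟨a, ha1, _, hloa, hhia⟩ ⟨b, hb1, _, hlob, hhib⟩
  rcases le_or_gt a b with hab | hab
  · have h1 : (2*c+1) * 2^a ≤ (2*c+1) * 2^b :=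
      Nat.mul_le_mul_left _ (Nat.pow_le_pow_right (by norm_num) hab)
    exact absurd (lt_of_lt_of_le (lt_of_lt_of_le hhia h1) hlob) (lt_irrefl v)
  · have h2 : (2*c+1+1) * 2^b ≤ (2*c) * 2^a := by
      calc (2*c+1+1) * 2^b ≤ (4*c) * 2^b := Nat.mul_le_mul_right _ (by omega)
        _ = (2*c) * 2^(b+1) := by ring
        _ ≤ (2*c) * 2^a := Nat.mul_le_mul_left _ (Nat.pow_le_pow_right (by norm_num) (by omega))
    exact absurd (lt_of_lt_of_le (lt_of_lt_of_le hhib h2) hloa) (lt_irrefl v)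

end Tree

section TreeMain

lemma biInter_setOf {Ω : Type*} (s : Finset ℕ) (P : ℕ → Ω → Prop) :
    (⋂ i ∈ s, {ω | P i ω}) = {ω | ∀ i ∈ s, P i ω} := by
  ext ω; simp

variable {Ω : Type*} [MeasurableSpace Ω] {μ : Measure Ω} [IsProbabilityMeasure μ]
  {X : ℕ → Ω → ℕ} {p : ℝ}

lemma tree_lb (hp : 0 ≤ p) (hp1 : p < 1) (hX : ∀ i, Measurable (X i))
    (hind : iIndepFun X μ)
    (hgeom : ∀ i, ∀ k : ℕ, 1 ≤ k →
      μ {ω | X i ω = k} = ENNReal.ofReal (p ^ (k - 1) * (1 - p))) :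
    ∀ N r t : ℕ, 1 ≤ r →
      Hc p N t ^ 2^N ≤
        μ (⋂ i ∈ Finset.Ico (r * 2^N) ((r+1) * 2^N),
            {ω | ∑ k ∈ Finset.range N, X (i / 2^k) ω ≤ t}) := by
  intro N
  induction N with
  | zero =>
    intro r t _
    have h0 : (⋂ i ∈ Finset.Ico (r * 2^0) ((r+1) * 2^0),
        {ω : Ω | ∑ k ∈ Finset.range 0, X (i / 2^k) ω ≤ t}) = Set.univ := by
      ext ω; simp
    rw [h0, measure_univ]
    simp [Hc]
  | succ N ih =>
    intro r t hr
    set A : ℕ → Set Ω := fun w => {ω | ∀ i ∈ Finset.Ico (2*r * 2^N) ((2*r+1) * 2^N),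
      ∑ k ∈ Finset.range N, X (i / 2^k) ω + w ≤ t} with hA
    set B : ℕ → Set Ω := fun w => {ω | ∀ i ∈ Finset.Ico ((2*r+1) * 2^N) ((2*r+1+1) * 2^N),
      ∑ k ∈ Finset.range N, X (i / 2^k) ω + w ≤ t} with hB
    set D : Set Ω := {ω | ∀ i ∈ Finset.Ico ((2*r+1) * 2^N) ((2*r+1+1) * 2^N),
      ∑ k ∈ Finset.range (N+1), X (i / 2^k) ω ≤ t} with hD
    have hdivL : ∀ i ∈ Finset.Ico (2*r * 2^N) ((2*r+1) * 2^N), i / 2^N = 2*r := by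
      intro i hi; rw [Finset.mem_Ico] at hi
      exact Nat.div_eq_of_lt_le hi.1 hi.2
    have hdivR : ∀ i ∈ Finset.Ico ((2*r+1) * 2^N) ((2*r+1+1) * 2^N), i / 2^N = 2*r+1 := by
      intro i hi; rw [Finset.mem_Ico] at hi
      exact Nat.div_eq_of_lt_le hi.1 hi.2
    -- measurability
    have hAmeas : ∀ w, MeasurableSet[famSA X (Spart (2*r) N)] (A w) := by
      intro w
      simp only [hA]
      rw [← biInter_setOf]
      refine MeasurableSet.biInter (Finset.countable_toSet _) fun i hi => ?_
      have hi2 : i ∈ Finset.Ico (2*r * 2^N) ((2*r+1) * 2^N) := hi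
      rw [Finset.mem_Ico] at hi2
      exact measurableSet_sum_add_le_famSA (S := Spart (2*r) N) (fun k => i / 2^k) N
        (fun k hk => Spart_mem hi2.1 hi2.2 hk) w t
    have hBmeas : ∀ w, MeasurableSet[famSA X (Spart (2*r+1) N)] (B w) := by
      intro w
      simp only [hB]
      rw [← biInter_setOf]
      refine MeasurableSet.biInter (Finset.countable_toSet _) fun i hi => ?_
      have hi2 : i ∈ Finset.Ico ((2*r+1) * 2^N) ((2*r+1+1) * 2^N) := hi
      rw [Finset.mem_Ico] at hi2
      exact measurableSet_sum_add_le_famSA (S := Spart (2*r+1) N) (fun k => i / 2^k) N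
        (fun k hk => Spart_mem hi2.1 hi2.2 hk) w t
    have hDmeas : MeasurableSet[famSA X (Spart (2*r+1) N ∪ {2*r+1})] D := by
      simp only [hD]
      rw [← biInter_setOf]
      refine MeasurableSet.biInter (Finset.countable_toSet _) fun i hi => ?_
      have hi1 : i ∈ Finset.Ico ((2*r+1) * 2^N) ((2*r+1+1) * 2^N) := hi
      have hi2 := hi1
      rw [Finset.mem_Ico] at hi2
      refine measurableSet_sum_le_famSA (S := Spart (2*r+1) N ∪ {2*r+1})
        (fun k => i / 2^k) (N+1) (fun k hk => ?_) t
      rcases Nat.lt_or_ge k N with h | h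
      · exact Set.mem_union_left _ (Spart_mem hi2.1 hi2.2 h)
      · have hkN : k = N := by omega
        show i / 2 ^ k ∈ Spart (2*r+1) N ∪ {2*r+1}
        rw [hkN, hdivR i hi1]
        exact Set.mem_union_right _ rfl
    -- peel the edge above 2r
    have hstep1 : μ (⋂ i ∈ Finset.Ico (r * 2^(N+1)) ((r+1) * 2^(N+1)),
        {ω | ∑ k ∈ Finset.range (N+1), X (i / 2^k) ω ≤ t})
        = ∑' w1 : ℕ, gp p w1 * μ (A w1 ∩ D) := by
      have hsplit : Finset.Ico (r * 2^(N+1)) ((r+1) * 2^(N+1)) =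
          Finset.Ico (2*r * 2^N) ((2*r+1) * 2^N) ∪
            Finset.Ico ((2*r+1) * 2^N) ((2*r+1+1) * 2^N) := by
        rw [Finset.Ico_union_Ico_eq_Ico
          (Nat.mul_le_mul_right _ (by omega)) (Nat.mul_le_mul_right _ (by omega))]
        congr 1 <;> ring
      have hev : (⋂ i ∈ Finset.Ico (r * 2^(N+1)) ((r+1) * 2^(N+1)),
          {ω : Ω | ∑ k ∈ Finset.range (N+1), X (i / 2^k) ω ≤ t})
          = {ω | ω ∈ (fun w => A w ∩ D) (X (2*r) ω)} := by
        rw [biInter_setOf, hsplit]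
        ext ω
        simp only [Set.mem_setOf_eq, Set.mem_inter_iff, Finset.mem_union, hA, hD]
        constructor
        · intro h
          refine ⟨fun i hi => ?_, fun i hi => h i (Or.inr hi)⟩
          have h2 := h i (Or.inl hi)
          rwa [Finset.sum_range_succ, hdivL i hi] at h2
        · rintro ⟨h1, h2⟩ i hi
          rcases hi with hi | hi
          · rw [Finset.sum_range_succ, hdivL i hi]
            exact h1 i hi
          · exact h2 i hi
      rw [hev, peel hX hind (2*r)
        (Spart (2*r) N ∪ (Spart (2*r+1) N ∪ {2*r+1}))
        (by
          intro hmem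
          rcases hmem with h | h
          · have := Spart_lb h; omega
          · rcases h with h | h
            · have := Spart_lb h; omega
            · simp only [Set.mem_singleton_iff] at h; omega)
        (fun w => A w ∩ D)
        (fun w => MeasurableSet.inter
          ((famSA_mono Set.subset_union_left) _ (hAmeas w))
          ((famSA_mono Set.subset_union_right) _ hDmeas))]
      exact tsum_congr fun w => by rw [pmf_unified hp hp1 hX hgeom]
    -- peel the edge above 2r+1
    have hstep2 : ∀ w1, μ (A w1 ∩ D) = ∑' w2 : ℕ, gp p w2 * (μ (A w1) * μ (B w2)) := by
      intro w1
      have hev2 : A w1 ∩ D = {ω | ω ∈ (fun w2 => A w1 ∩ B w2) (X (2*r+1) ω)} := by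
        ext ω
        simp only [Set.mem_inter_iff, Set.mem_setOf_eq, hB, hD]
        refine and_congr_right fun _ => ?_
        constructor
        · intro h i hi
          have h2 := h i hi
          rwa [Finset.sum_range_succ, hdivR i hi] at h2
        · intro h i hi
          have h2 := h i hi
          rw [Finset.sum_range_succ, hdivR i hi]
          exact h2
      rw [hev2, peel hX hind (2*r+1) (Spart (2*r) N ∪ Spart (2*r+1) N)
        (by
          intro hmem
          rcases hmem with h | h
          · have := Spart_lb h; omega
          · have := Spart_lb h; omega)
        (fun w2 => A w1 ∩ B w2)
        (fun w2 => MeasurableSet.inter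
          ((famSA_mono Set.subset_union_left) _ (hAmeas w1))
          ((famSA_mono Set.subset_union_right) _ (hBmeas w2)))]
      refine tsum_congr fun w2 => ?_
      rw [pmf_unified hp hp1 hX hgeom,
        measure_inter_famSA hX hind (Spart_disjoint hr) (hAmeas w1) (hBmeas w2)]
    -- lower bounds from the induction hypothesis
    have hAlb : ∀ w, w ∈ Finset.Icc 1 t → Hc p N (t - w) ^ 2^N ≤ μ (A w) := by
      intro w hw
      rw [Finset.mem_Icc] at hw
      have he : A w = ⋂ i ∈ Finset.Ico ((2*r) * 2^N) ((2*r+1) * 2^N),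
          {ω | ∑ k ∈ Finset.range N, X (i / 2^k) ω ≤ t - w} := by
        simp only [hA]
        rw [biInter_setOf]
        refine Set.ext fun ω => ?_
        simp only [Set.mem_setOf_eq]
        exact forall₂_congr fun i hi => by omega
      rw [he]
      exact ih (2*r) (t - w) (by omega)
    have hBlb : ∀ w, w ∈ Finset.Icc 1 t → Hc p N (t - w) ^ 2^N ≤ μ (B w) := by
      intro w hw
      rw [Finset.mem_Icc] at hw
      have he : B w = ⋂ i ∈ Finset.Ico ((2*r+1) * 2^N) ((2*r+1+1) * 2^N),
          {ω | ∑ k ∈ Finset.range N, X (i / 2^k) ω ≤ t - w} := by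
        simp only [hB]
        rw [biInter_setOf]
        refine Set.ext fun ω => ?_
        simp only [Set.mem_setOf_eq]
        exact forall₂_congr fun i hi => by omega
      rw [he]
      exact ih (2*r+1) (t - w) (by omega)
    -- final chain
    set u : ℕ → ENNReal := fun w => Hc p N (t - w) ^ 2^N with hu
    calc Hc p (N+1) t ^ 2^(N+1)
        = ((∑ w ∈ Finset.Icc 1 t, gp p w * Hc p N (t - w)) ^ 2^N) ^ 2 := by
          rw [pow_succ 2 N, pow_mul]
          rfl
      _ ≤ (∑ w ∈ Finset.Icc 1 t, gp p w * u w) ^ 2 := by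
          refine pow_le_pow_left' ?_ 2
          exact jensen_pow _ _ _ (sum_gp_le_one hp hp1 _) (2^N) Nat.one_le_two_pow
      _ = ∑ w1 ∈ Finset.Icc 1 t, gp p w1 *
            (∑ w2 ∈ Finset.Icc 1 t, gp p w2 * (u w1 * u w2)) := by
          rw [sq, Finset.sum_mul_sum]
          refine Finset.sum_congr rfl fun w1 _ => ?_
          rw [Finset.mul_sum]
          refine Finset.sum_congr rfl fun w2 _ => ?_
          ring
      _ ≤ ∑ w1 ∈ Finset.Icc 1 t, gp p w1 * μ (A w1 ∩ D) := by
          refine Finset.sum_le_sum fun w1 hw1 => mul_le_mul_right ?_ _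
          rw [hstep2 w1]
          calc ∑ w2 ∈ Finset.Icc 1 t, gp p w2 * (u w1 * u w2)
              ≤ ∑ w2 ∈ Finset.Icc 1 t, gp p w2 * (μ (A w1) * μ (B w2)) := by
                refine Finset.sum_le_sum fun w2 hw2 => mul_le_mul_right ?_ _
                exact mul_le_mul' (hAlb w1 hw1) (hBlb w2 hw2)
            _ ≤ ∑' w2 : ℕ, gp p w2 * (μ (A w1) * μ (B w2)) := ENNReal.sum_le_tsum _
      _ ≤ ∑' w1 : ℕ, gp p w1 * μ (A w1 ∩ D) := ENNReal.sum_le_tsum _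
      _ = μ (⋂ i ∈ Finset.Ico (r * 2^(N+1)) ((r+1) * 2^(N+1)),
            {ω | ∑ k ∈ Finset.range (N+1), X (i / 2^k) ω ≤ t}) := hstep1.symm

end TreeMain

lemma measurable_finset_sup {Ω : Type*} [MeasurableSpace Ω] (s : Finset ℕ) (f : ℕ → Ω → ℕ)
    (hf : ∀ i, Measurable (f i)) : Measurable (fun ω => s.sup fun i => f i ω) := by
  induction s using Finset.cons_induction with
  | empty => simpa [Finset.sup_empty] using measurable_const
  | cons a s ha ih =>
    simp only [Finset.sup_cons]
    exact (hf a).sup ih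

/-- Complete binary tree with `2^N` leaves (heap indexing: leaf `i ∈ [2^N, 2^{N+1})`,
the edges on the root-to-leaf path are those above nodes `i / 2^k`, `k < N`).
Edge delays `G v` are i.i.d. geometric(`p`); `T_i = ∑_{k<N} G (i / 2^k)` is the leaf
arrival time. `Ĝ i k` are fully i.i.d. geometric(`p`), giving i.i.d. path delays
`T̂_i = ∑_{k<N} Ĝ i k`. Then `E[max_i T_i] ≤ E[max_i T̂_i]`. -/
theorem claim_tree_upper_bound {Ω : Type*} [MeasurableSpace Ω] (μ : Measure Ω)
    [IsProbabilityMeasure μ] (p : ℝ) (hp : 0 < p) (hp1 : p < 1)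
    (N : ℕ) (hN : 1 ≤ N)
    (G : ℕ → Ω → ℕ) (Ghat : ℕ → ℕ → Ω → ℕ)
    (hGmeas : ∀ v, Measurable (G v)) (hGhatmeas : ∀ i k, Measurable (Ghat i k))
    (hGindep : iIndepFun G μ)
    (hGhatindep : iIndepFun
      (fun q : ℕ × ℕ => Ghat q.1 q.2) μ)
    (hGgeom : ∀ v, ∀ k : ℕ, 1 ≤ k →
      μ {ω | G v ω = k} = ENNReal.ofReal (p ^ (k - 1) * (1 - p)))
    (hGhatgeom : ∀ i j, ∀ k : ℕ, 1 ≤ k →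
      μ {ω | Ghat i j ω = k} = ENNReal.ofReal (p ^ (k - 1) * (1 - p))) :
    (∫⁻ ω, (((Finset.Ico (2 ^ N) (2 ^ (N + 1))).sup
        fun i => ∑ k ∈ Finset.range N, G (i / 2 ^ k) ω : ℕ) : ENNReal) ∂μ) ≤
    ∫⁻ ω, (((Finset.Ico (2 ^ N) (2 ^ (N + 1))).sup
        fun i => ∑ k ∈ Finset.range N, Ghat i k ω : ℕ) : ENNReal) ∂μ := by
  have hp0 : (0:ℝ) ≤ p := hp.le
  set Y : ℕ × ℕ → Ω → ℕ := fun q => Ghat q.1 q.2 with hYdef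
  have hYmeas : ∀ q, Measurable (Y q) := fun q => hGhatmeas q.1 q.2
  have hYgeom : ∀ q : ℕ × ℕ, ∀ k : ℕ, 1 ≤ k →
      μ {ω | Y q ω = k} = ENNReal.ofReal (p ^ (k - 1) * (1 - p)) :=
    fun q => hGhatgeom q.1 q.2
  set fT : Ω → ℕ := fun ω => (Finset.Ico (2 ^ N) (2 ^ (N + 1))).sup
      fun i => ∑ k ∈ Finset.range N, G (i / 2 ^ k) ω with hfT
  set fH : Ω → ℕ := fun ω => (Finset.Ico (2 ^ N) (2 ^ (N + 1))).sup
      fun i => ∑ k ∈ Finset.range N, Ghat i k ω with hfH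
  have hfTmeas : Measurable fT := by
    refine measurable_finset_sup _ _ fun i => ?_
    exact Finset.measurable_sum _ fun k _ => hGmeas _
  have hfHmeas : Measurable fH := by
    refine measurable_finset_sup _ _ fun i => ?_
    exact Finset.measurable_sum _ fun k _ => hGhatmeas _ _
  rw [lintegral_nat μ fT hfTmeas, lintegral_nat μ fH hfHmeas]
  refine ENNReal.tsum_le_tsum fun t => ?_
  -- key CDF comparison at level t
  have hcard : (Finset.Ico (2 ^ N) (2 ^ (N + 1))).card = 2 ^ N := by
    rw [Nat.card_Ico, pow_succ]
    omega
  -- hat side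
  have hhat : μ {ω | fH ω ≤ t} = Hc p N t ^ 2 ^ N := by
    have h1 : {ω | fH ω ≤ t} = ⋂ i ∈ Finset.Ico (2 ^ N) (2 ^ (N + 1)),
        {ω | ∑ k ∈ Finset.range N, Y (i, k) ω ≤ t} := by
      rw [biInter_setOf]
      ext ω
      simp only [hfH, Set.mem_setOf_eq, Finset.sup_le_iff, hYdef]
    rw [h1, prod_groups hYmeas hGhatindep _ (fun i => {q : ℕ × ℕ | q.1 = i})
      (fun a _ b _ hab => Set.disjoint_left.2 fun q hqa hqb => hab (hqa.symm.trans hqb))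
      _ (fun i _ => measurableSet_sum_le_famSA (S := {q : ℕ × ℕ | q.1 = i})
        (fun k => (i, k)) N (fun k _ => rfl) t)]
    have h2 : ∀ i, μ {ω | ∑ k ∈ Finset.range N, Y (i, k) ω ≤ t} = Hc p N t := by
      intro i
      exact marg_cdf hp0 hp1 hYmeas hGhatindep hYgeom (fun k => (i, k)) N
        (fun k l _ _ h => (Prod.ext_iff.1 h).2) t
    rw [Finset.prod_congr rfl fun i _ => h2 i, Finset.prod_const, hcard]
  -- tree side
  have htree : Hc p N t ^ 2 ^ N ≤ μ {ω | fT ω ≤ t} := by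
    have h1 : {ω | fT ω ≤ t} = ⋂ i ∈ Finset.Ico (1 * 2 ^ N) ((1 + 1) * 2 ^ N),
        {ω | ∑ k ∈ Finset.range N, G (i / 2 ^ k) ω ≤ t} := by
      rw [biInter_setOf]
      ext ω
      simp only [hfT, Set.mem_setOf_eq, Finset.sup_le_iff, one_mul]
      constructor
      · intro h i hi
        refine h i ?_
        rwa [show (1 + 1) * 2 ^ N = 2 ^ (N + 1) by ring] at hi
      · intro h i hi
        refine h i ?_
        rwa [show (1 + 1) * 2 ^ N = 2 ^ (N + 1) by ring]
    rw [h1]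
    exact tree_lb hp0 hp1 hGmeas hGindep hGgeom N 1 t le_rfl
  have hkey : μ {ω | fH ω ≤ t} ≤ μ {ω | fT ω ≤ t} := hhat ▸ htree
  -- complement
  have hcT : {ω | t < fT ω} = {ω | fT ω ≤ t}ᶜ := by
    ext ω; simp [not_le]
  have hcH : {ω | t < fH ω} = {ω | fH ω ≤ t}ᶜ := by
    ext ω; simp [not_le]
  have e1 : μ {ω | fT ω ≤ t}ᶜ = 1 - μ {ω | fT ω ≤ t} :=
    prob_compl_eq_one_sub (show MeasurableSet {ω | fT ω ≤ t} from hfTmeas measurableSet_Iic)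
  have e2 : μ {ω | fH ω ≤ t}ᶜ = 1 - μ {ω | fH ω ≤ t} :=
    prob_compl_eq_one_sub (show MeasurableSet {ω | fH ω ≤ t} from hfHmeas measurableSet_Iic)
  rw [hcT, hcH, e1, e2]
  exact tsub_le_tsub_left hkey 1
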